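/- Let κ ≥ ω and let B be a coproduct (free product) of boolean algebras each of size at most κ. Then every subset of B has a dense subset in which no element lies below κ-many elements; i.e., every subset of B is almost κ^op-like. -/

import Mathlib

open Cardinal

universe u
set_option linter.unusedSectionVars false
set_option linter.unusedVariables false
variable {B : Type u} [BooleanAlgebra B]

def boolGen (S : Set B) : Set B :=
  ⋂₀ {T : Set B | S ⊆ T ∧ (⊥ : B) ∈ T ∧ (∀ x ∈ T, xᶜ ∈ T) ∧ ∀ x ∈ T, ∀ y ∈ T, x ⊔ y ∈ T}

def IsBoolSubalg (A : Set B) : Prop :=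
  (⊥ : B) ∈ A ∧ (∀ x ∈ A, xᶜ ∈ A) ∧ ∀ x ∈ A, ∀ y ∈ A, x ⊔ y ∈ A

namespace FPaux

variable {ι : Type u}

/-- Normal-form description of the subalgebra generated by the factors `A i`, `i ∈ s`. -/
def J (A : ι → Set B) (s : Finset ι) : Set B :=
  {b | ∃ F : Finset (ι → B), (∀ f ∈ F, ∀ i ∈ s, f i ∈ A i) ∧ b = F.sup fun f => s.inf f}

variable {A : ι → Set B}

lemma top_mem_A (hsub : ∀ i, IsBoolSubalg (A i)) (i : ι) : (⊤ : B) ∈ A i := by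
  have h := (hsub i).2.1 _ (hsub i).1
  simpa using h

lemma inf_mem_A (hsub : ∀ i, IsBoolSubalg (A i)) {i : ι} {x y : B}
    (hx : x ∈ A i) (hy : y ∈ A i) : x ⊓ y ∈ A i := by
  have h := (hsub i).2.1 _ ((hsub i).2.2 _ ((hsub i).2.1 _ hx) _ ((hsub i).2.1 _ hy))
  simpa using h

lemma finf_inf {s : Finset ι} (f g : ι → B) :
    s.inf f ⊓ s.inf g = s.inf fun i => f i ⊓ g i := by
  apply le_antisymm
  · exact Finset.le_inf fun i hi =>
      inf_le_inf (Finset.inf_le hi) (Finset.inf_le hi)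
  · exact le_inf (Finset.inf_mono_fun fun i _ => inf_le_left)
      (Finset.inf_mono_fun fun i _ => inf_le_right)

lemma compl_finsetInf (s : Finset ι) (f : ι → B) :
    (s.inf f)ᶜ = s.sup fun i => (f i)ᶜ := by
  classical
  induction s using Finset.induction_on with
  | empty => simp
  | insert a s h ih => simp [Finset.inf_insert, Finset.sup_insert, compl_inf, ih]

lemma bot_mem_J (s : Finset ι) : (⊥ : B) ∈ J A s := ⟨∅, by simp, by simp⟩

lemma elem_mem_J {s : Finset ι} {f : ι → B} (hf : ∀ i ∈ s, f i ∈ A i) :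
    s.inf f ∈ J A s := ⟨{f}, by simpa using hf, by simp⟩

lemma top_mem_J (hsub : ∀ i, IsBoolSubalg (A i)) (s : Finset ι) : (⊤ : B) ∈ J A s := by
  have := elem_mem_J (A := A) (s := s) (f := fun _ => ⊤)
    (fun i _ => top_mem_A hsub i)
  simpa using this

lemma single_mem_J (hsub : ∀ i, IsBoolSubalg (A i)) {s : Finset ι} {i : ι} (hi : i ∈ s)
    {a : B} (ha : a ∈ A i) : a ∈ J A s := by
  classical
  have hf : ∀ j ∈ s, (fun j => if j = i then a else ⊤) j ∈ A j := by
    intro j _; by_cases h : j = i <;> simp [h, ha, top_mem_A hsub j]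
  have h := elem_mem_J (A := A) hf
  have : s.inf (fun j => if j = i then a else ⊤) = a := by
    apply le_antisymm
    · simpa using Finset.inf_le (f := fun j => if j = i then a else ⊤) hi
    · exact Finset.le_inf fun j _ => by by_cases h : j = i <;> simp [h]
  rwa [this] at h

lemma J_mono {s t : Finset ι} (hst : s ⊆ t) (hsub : ∀ i, IsBoolSubalg (A i)) :
    J A s ⊆ J A t := by
  classical
  rintro b ⟨F, hF, rfl⟩
  refine ⟨F.image (fun f j => if j ∈ s then f j else ⊤), ?_, ?_⟩
  · intro f hf
    simp only [Finset.mem_image] at hf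
    obtain ⟨g, hg, rfl⟩ := hf
    intro i _
    by_cases h : i ∈ s <;> simp [h, hF g hg i, top_mem_A hsub i]
  · rw [Finset.sup_image]
    refine Finset.sup_congr rfl fun f hf => ?_
    have h1 : t.inf (fun j => if j ∈ s then f j else ⊤)
        = s.inf (fun j => if j ∈ s then f j else ⊤) ⊓
          (t \ s).inf (fun j => if j ∈ s then f j else ⊤) := by
      rw [← Finset.inf_union, Finset.union_sdiff_of_subset hst]
    have h2 : s.inf (fun j => if j ∈ s then f j else ⊤) = s.inf f :=
      Finset.inf_congr rfl fun j hj => by simp [hj]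
    have h3 : (t \ s).inf (fun j => if j ∈ s then f j else ⊤) = ⊤ :=
      le_antisymm le_top (Finset.le_inf fun j hj => by
        simp [(Finset.mem_sdiff.1 hj).2])
    simp [Function.comp, h1, h2, h3]

lemma sup_mem_J {s : Finset ι} {b c : B} (hb : b ∈ J A s) (hc : c ∈ J A s) :
    b ⊔ c ∈ J A s := by
  classical
  obtain ⟨F, hF, rfl⟩ := hb
  obtain ⟨G, hG, rfl⟩ := hc
  exact ⟨F ∪ G, fun f hf => (Finset.mem_union.1 hf).elim (hF f) (hG f),
    (Finset.sup_union).symm⟩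

lemma inf_mem_J (hsub : ∀ i, IsBoolSubalg (A i)) {s : Finset ι} {b c : B}
    (hb : b ∈ J A s) (hc : c ∈ J A s) : b ⊓ c ∈ J A s := by
  classical
  obtain ⟨F, hF, rfl⟩ := hb
  obtain ⟨G, hG, rfl⟩ := hc
  refine ⟨(F ×ˢ G).image (fun p j => p.1 j ⊓ p.2 j), ?_, ?_⟩
  · intro f hf
    simp only [Finset.mem_image, Finset.mem_product] at hf
    obtain ⟨p, ⟨hp1, hp2⟩, rfl⟩ := hf
    exact fun i hi => inf_mem_A hsub (hF _ hp1 i hi) (hG _ hp2 i hi)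
  · rw [Finset.sup_image, Finset.sup_inf_sup]
    refine Finset.sup_congr rfl fun p _ => ?_
    exact (finf_inf _ _)

lemma literalSup_mem_J (hsub : ∀ i, IsBoolSubalg (A i)) {s : Finset ι} {g : ι → B}
    (hg : ∀ i ∈ s, g i ∈ A i) : s.sup g ∈ J A s := by
  classical
  induction s using Finset.induction_on with
  | empty => simpa using bot_mem_J ∅
  | @insert j t hj ih =>
      rw [Finset.sup_insert]
      refine sup_mem_J (single_mem_J hsub (Finset.mem_insert_self j t) (hg j (by simp))) ?_
      have h2 : t.sup g ∈ J A t := ih (fun i hi => hg i (Finset.mem_insert_of_mem hi))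
      exact J_mono (Finset.subset_insert j t) hsub h2

lemma compl_mem_J (hsub : ∀ i, IsBoolSubalg (A i)) {s : Finset ι} {b : B}
    (hb : b ∈ J A s) : bᶜ ∈ J A s := by
  classical
  obtain ⟨F, hF, rfl⟩ := hb
  induction F using Finset.induction_on with
  | empty => simpa using top_mem_J hsub s
  | @insert f G hf ih =>
      rw [Finset.sup_insert, compl_sup]
      refine inf_mem_J hsub ?_ (ih fun g hg => hF g (Finset.mem_insert_of_mem hg))
      rw [compl_finsetInf]
      exact literalSup_mem_J hsub fun i hi =>
        (hsub i).2.1 _ (hF f (Finset.mem_insert_self f G) i hi)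
section Part2
variable {ι : Type u} [DecidableEq ι] {A : ι → Set B}

lemma exists_disjunct {s : Finset ι} {b : B} (hb : b ∈ J A s) (hbne : b ≠ ⊥) :
    ∃ f : ι → B, (∀ i ∈ s, f i ∈ A i) ∧ s.inf f ≠ ⊥ ∧ s.inf f ≤ b := by
  obtain ⟨F, hF, rfl⟩ := hb
  by_cases h : ∀ f ∈ F, s.inf f = ⊥
  · exact absurd ((Finset.sup_eq_bot_iff _ _).2 h) hbne
  · push_neg at h
    obtain ⟨f, hfF, hf⟩ := h
    exact ⟨f, hF f hfF, hf, Finset.le_sup hfF⟩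

lemma indep_J (hind : ∀ s : Finset ι, ∀ f : ι → B,
      (∀ i ∈ s, f i ∈ A i ∧ f i ≠ ⊥) → s.inf f ≠ ⊥)
    {s t : Finset ι} (hdisj : Disjoint s t) {u v : B}
    (hu : u ∈ J A s) (hv : v ∈ J A t) (hune : u ≠ ⊥) (hvne : v ≠ ⊥) :
    u ⊓ v ≠ ⊥ := by
  classical
  obtain ⟨f, hf, hfne, hfle⟩ := exists_disjunct hu hune
  obtain ⟨g, hg, hgne, hgle⟩ := exists_disjunct hv hvne
  set h : ι → B := fun i => if i ∈ s then f i else g i with hh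
  have hs : s.inf h = s.inf f := Finset.inf_congr rfl fun i hi => by simp [hh, hi]
  have ht : t.inf h = t.inf g := Finset.inf_congr rfl fun i hi => by
    simp [hh, Finset.disjoint_right.1 hdisj hi]
  have key : (s ∪ t).inf h ≠ ⊥ := by
    refine hind (s ∪ t) h fun i hi => ?_
    rcases Finset.mem_union.1 hi with hi | hi
    · have hne : f i ≠ ⊥ := fun hbot => hfne (le_bot_iff.1 (hbot ▸ Finset.inf_le (f := f) hi))
      refine ⟨by simp [hh, hi, hf i hi], ?_⟩
      simpa [hh, hi] using hne
    · have his : i ∉ s := Finset.disjoint_right.1 hdisj hi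
      have hne : g i ≠ ⊥ := fun hbot => hgne (le_bot_iff.1 (hbot ▸ Finset.inf_le (f := g) hi))
      refine ⟨by simp [hh, his, hg i hi], ?_⟩
      simpa [hh, his] using hne
  intro hc
  apply key
  rw [Finset.inf_union, hs, ht]
  exact le_bot_iff.1 (hc ▸ inf_le_inf hfle hgle)

lemma interp (hsub : ∀ i, IsBoolSubalg (A i))
    (hind : ∀ s : Finset ι, ∀ f : ι → B,
      (∀ i ∈ s, f i ∈ A i ∧ f i ≠ ⊥) → s.inf f ≠ ⊥)
    {s : Finset ι} (t : Finset ι) {m : B} (hm : m ∈ J A s) :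
    ∃ c, c ∈ J A (s ∩ t) ∧ m ≤ c ∧ ∀ b ∈ J A t, m ≤ b → c ≤ b := by
  classical
  obtain ⟨F, hF, rfl⟩ := hm
  have hsplit : ∀ f : ι → B, s.inf f = (s ∩ t).inf f ⊓ (s \ t).inf f := by
    intro f
    rw [← Finset.inf_union]
    congr 1
    ext i
    simp only [Finset.mem_union, Finset.mem_inter, Finset.mem_sdiff]
    tauto
  refine ⟨(F.filter fun f => (s \ t).inf f ≠ ⊥).sup fun f => (s ∩ t).inf f, ?_, ?_, ?_⟩
  · refine ⟨F.filter fun f => (s \ t).inf f ≠ ⊥, fun f hf i hi => ?_, rfl⟩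
    exact hF f (Finset.mem_of_mem_filter f hf) i (Finset.mem_inter.1 hi).1
  · refine Finset.sup_le fun f hf => ?_
    by_cases hd : (s \ t).inf f = ⊥
    · rw [hsplit f, hd, inf_bot_eq]; exact bot_le
    · exact (hsplit f ▸ inf_le_left).trans
        (Finset.le_sup (Finset.mem_filter.2 ⟨hf, hd⟩))
  · intro b hb hmb
    refine Finset.sup_le fun f hf => ?_
    obtain ⟨hfF, hd⟩ := Finset.mem_filter.1 hf
    have hcmem : (s ∩ t).inf f ⊓ bᶜ ∈ J A t := by
      refine inf_mem_J hsub ?_ (compl_mem_J hsub hb)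
      exact J_mono Finset.inter_subset_right hsub
        (elem_mem_J fun i hi => hF f hfF i (Finset.mem_inter.1 hi).1)
    have hdmem : (s \ t).inf f ∈ J A (s \ t) :=
      elem_mem_J fun i hi => hF f hfF i (Finset.mem_sdiff.1 hi).1
    have hdisj : Disjoint t (s \ t) := Finset.disjoint_sdiff
    by_contra hle
    have hxne : (s ∩ t).inf f ⊓ bᶜ ≠ ⊥ := by
      intro hx
      apply hle
      rwa [← sdiff_eq, sdiff_eq_bot_iff] at hx
    have := indep_J hind hdisj hcmem hdmem hxne hd
    apply this
    have h1 : s.inf f ≤ b := (Finset.le_sup hfF).trans hmb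
    have : (s ∩ t).inf f ⊓ bᶜ ⊓ (s \ t).inf f = s.inf f ⊓ bᶜ := by
      rw [hsplit f]; ac_rfl
    rw [this]
    rw [← sdiff_eq, sdiff_eq_bot_iff]
    exact h1

lemma exists_J_mem (hsub : ∀ i, IsBoolSubalg (A i))
    (hgen : boolGen (⋃ i, A i) = Set.univ) (b : B) : ∃ s : Finset ι, b ∈ J A s := by
  classical
  have hb : b ∈ boolGen (⋃ i, A i) := by rw [hgen]; trivial
  refine hb {b | ∃ s : Finset ι, b ∈ J A s} ⟨?_, ⟨∅, bot_mem_J ∅⟩, ?_, ?_⟩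
  · rintro a ha
    obtain ⟨_, ⟨i, rfl⟩, hai⟩ := ha
    exact ⟨{i}, single_mem_J hsub (Finset.mem_singleton_self i) hai⟩
  · rintro x ⟨s, hs⟩
    exact ⟨s, compl_mem_J hsub hs⟩
  · rintro x ⟨s, hs⟩ y ⟨t, ht⟩
    exact ⟨s ∪ t, sup_mem_J (J_mono Finset.subset_union_left hsub hs)
      (J_mono Finset.subset_union_right hsub ht)⟩

lemma inter_mem_J (hsub : ∀ i, IsBoolSubalg (A i))
    (hind : ∀ s : Finset ι, ∀ f : ι → B,
      (∀ i ∈ s, f i ∈ A i ∧ f i ≠ ⊥) → s.inf f ≠ ⊥)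
    {s t : Finset ι} {b : B} (hbs : b ∈ J A s) (hbt : b ∈ J A t) :
    b ∈ J A (s ∩ t) := by
  obtain ⟨c, hc, hbc, hmin⟩ := interp hsub hind t hbs
  have : c = b := le_antisymm (hmin b hbt le_rfl) hbc
  rwa [← this]

end Part2
section Part3
variable {ι : Type u} [DecidableEq ι] {A : ι → Set B}

variable (A) in
/-- The minimal support of an element of `B`. -/
noncomputable def supp (hsub : ∀ i, IsBoolSubalg (A i))
    (hind : ∀ s : Finset ι, ∀ f : ι → B,
      (∀ i ∈ s, f i ∈ A i ∧ f i ≠ ⊥) → s.inf f ≠ ⊥)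
    (hgen : boolGen (⋃ i, A i) = Set.univ) (b : B) : Finset ι :=
  letI : DecidablePred (fun s : Finset ι => b ∈ J A s) :=
    fun s => Classical.propDecidable _
  ((exists_J_mem hsub hgen b).choose.powerset.filter (fun s => b ∈ J A s)).inf'
    ⟨(exists_J_mem hsub hgen b).choose,
      Finset.mem_filter.2 ⟨Finset.mem_powerset_self _, (exists_J_mem hsub hgen b).choose_spec⟩⟩ id

variable (hsub : ∀ i, IsBoolSubalg (A i))
    (hind : ∀ s : Finset ι, ∀ f : ι → B,
      (∀ i ∈ s, f i ∈ A i ∧ f i ≠ ⊥) → s.inf f ≠ ⊥)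
    (hgen : boolGen (⋃ i, A i) = Set.univ)

lemma mem_J_supp (b : B) : b ∈ J A (supp A hsub hind hgen b) := by
  classical
  refine Finset.inf'_mem {s : Finset ι | b ∈ J A s}
    (fun x hx y hy => inter_mem_J hsub hind hx hy) _ _ _ (fun s hs => ?_)
  · exact (Finset.mem_filter.1 hs).2

lemma supp_subset {b : B} {t : Finset ι} (hbt : b ∈ J A t) :
    supp A hsub hind hgen b ⊆ t := by
  classical
  have h0 := (exists_J_mem hsub hgen b).choose_spec
  have hmem : (exists_J_mem hsub hgen b).choose ∩ t ∈
      ((exists_J_mem hsub hgen b).choose.powerset.filter (fun s => b ∈ J A s)) :=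
    Finset.mem_filter.2 ⟨Finset.mem_powerset.2 Finset.inter_subset_left,
      inter_mem_J hsub hind h0 hbt⟩
  have hle : supp A hsub hind hgen b ≤ (exists_J_mem hsub hgen b).choose ∩ t :=
    Finset.inf'_le (f := id) hmem
  exact subset_trans hle Finset.inter_subset_right

lemma mem_J_of_supp_subset {b : B} {t : Finset ι}
    (h : supp A hsub hind hgen b ⊆ t) : b ∈ J A t :=
  J_mono h hsub (mem_J_supp hsub hind hgen b)

/-- Cardinality bound for generated subalgebras. -/
lemma card_J_le {κ : Cardinal.{u}} (hκ : ℵ₀ ≤ κ) (hsize : ∀ i, #(A i) ≤ κ)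
    (s : Finset ι) : #(J A s) ≤ κ := by
  classical
  set X := (i : {x // x ∈ s}) → (A i.1 : Set B) with hX
  have hXcard : #X ≤ κ := by
    calc #X = Cardinal.prod (fun i : {x // x ∈ s} => #(A i.1)) := Cardinal.mk_pi _
    _ ≤ Cardinal.prod (fun _ : {x // x ∈ s} => κ) :=
        Cardinal.prod_le_prod _ _ (fun i => hsize i.1)
    _ = κ ^ #{x // x ∈ s} := Cardinal.prod_const' _ _
    _ = κ ^ (s.card : Cardinal) := by rw [Cardinal.mk_coe_finset]
    _ ≤ κ := by
        rw [Cardinal.power_natCast]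
        exact Cardinal.power_nat_le hκ
  have hsub2 : J A s ⊆ Set.range (fun F : Finset X =>
      F.sup fun f => s.attach.inf fun i => (f i : B)) := by
    rintro b ⟨F, hF, rfl⟩
    refine ⟨F.attach.image (fun f => fun i : {x // x ∈ s} =>
      (⟨f.1 i.1, hF f.1 f.2 i.1 i.2⟩ : (A i.1 : Set B))), ?_⟩
    dsimp only
    rw [Finset.sup_image]
    rw [← Finset.sup_attach (s := F) (f := fun f => s.inf f)]
    refine Finset.sup_congr rfl fun f _ => ?_
    simpa using Finset.inf_attach s f.1
  calc #(J A s) ≤ #(Set.range (fun F : Finset X =>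
      F.sup fun f => s.attach.inf fun i => (f i : B))) := Cardinal.mk_le_mk_of_subset hsub2
  _ ≤ #(Finset X) := Cardinal.mk_range_le
  _ ≤ κ := by
      rcases finite_or_infinite X with hfin | hinf
      · haveI := Fintype.ofFinite X
        exact le_trans (Cardinal.lt_aleph0_of_finite (Finset X)).le hκ
      · rw [Cardinal.mk_finset_of_infinite]
        exact hXcard

end Part3
section Part4
variable {ι : Type u} [DecidableEq ι] {A : ι → Set B}

/-- The inductive statement: `Q` has a dense subset `D` such that moreover every
`m` with a lower bound in `Q` has a lower bound in `D` and fewer than `κ` elements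
of `D` above it. -/
def PStmt (κ : Cardinal.{u}) (Q : Set B) : Prop :=
  ∃ D : Set B, D ⊆ Q ∧ (∀ q ∈ Q, ∃ d ∈ D, d ≤ q) ∧
    ∀ m : B, (∃ q ∈ Q, q ≤ m) → (∃ d ∈ D, d ≤ m) ∧ #{e : B // e ∈ D ∧ m ≤ e} < κ

lemma card_le_typein_lt {κ : Cardinal.{u}} (hκ : ℵ₀ ≤ κ) (z : κ.ord.ToType) :
    #{y : κ.ord.ToType // y ≤ z} < κ := by
  have h1 : #{y : κ.ord.ToType // y < z} < κ := by
    have := Cardinal.mk_Iio_ord_toType z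
    exact this
  have h2 : {y : κ.ord.ToType | y ≤ z} ⊆ {y | y < z} ∪ {z} := by
    intro y hy
    have hy' : y ≤ z := hy
    rcases lt_or_eq_of_le hy' with h | h
    · exact Or.inl h
    · exact Or.inr (by simp [h])
  calc #{y : κ.ord.ToType // y ≤ z} ≤ #(({y : κ.ord.ToType | y < z} ∪ {z} : Set _)) :=
        Cardinal.mk_le_mk_of_subset h2
  _ ≤ #{y : κ.ord.ToType | y < z} + #({z} : Set κ.ord.ToType) := Cardinal.mk_union_le _ _
  _ < κ := Cardinal.add_lt_of_lt hκ h1 (by simpa using one_lt_aleph0.trans_le hκ)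

/-- Base case: any subset of size at most `κ`. -/
lemma pstmt_of_card_le {κ : Cardinal.{u}} (hκ : ℵ₀ ≤ κ) (Q : Set B) (hQ : #Q ≤ κ) :
    PStmt κ Q := by
  have hle : #Q ≤ #(κ.ord.ToType) := by rw [Cardinal.mk_ord_toType]; exact hQ
  obtain ⟨r⟩ := Cardinal.le_def _ _ |>.1 hle
  set D : Set B := {b | ∃ h : b ∈ Q, ∀ b' (h' : b' ∈ Q), b' ≤ b → r ⟨b, h⟩ ≤ r ⟨b', h'⟩}
    with hD
  have hDQ : D ⊆ Q := fun b hb => hb.choose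
  -- minimal-rank lower bounds
  have key : ∀ q ∈ Q, ∃ x, ∃ hx : x ∈ Q, x ≤ q ∧ x ∈ D := by
    intro q hq
    set T : Set κ.ord.ToType := {y | ∃ x : Q, (x : B) ≤ q ∧ r x = y} with hT
    have hTne : T.Nonempty := ⟨r ⟨q, hq⟩, ⟨q, hq⟩, le_rfl, rfl⟩
    obtain ⟨y₀, hy₀, hy₀min⟩ := (wellFounded_lt (α := κ.ord.ToType)).has_min T hTne
    obtain ⟨x, hxq, hxr⟩ := hy₀
    refine ⟨x, x.2, hxq, x.2, ?_⟩
    intro b' h' hb'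
    have : r ⟨b', h'⟩ ∈ T := ⟨⟨b', h'⟩, le_trans hb' hxq, rfl⟩
    have := hy₀min _ this
    rw [← hxr] at this
    simpa [Subtype.coe_eta] using not_lt.1 this
  refine ⟨D, hDQ, ?_, ?_⟩
  · intro q hq
    obtain ⟨x, hx, hxq, hxD⟩ := key q hq
    exact ⟨x, hxD, hxq⟩
  · intro m ⟨q, hq, hqm⟩
    obtain ⟨x, hx, hxq, hxD⟩ := key q hq
    refine ⟨⟨x, hxD, le_trans hxq hqm⟩, ?_⟩
    have hxm : x ≤ m := le_trans hxq hqm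
    -- every element of D above m has rank at most that of x
    have hembed : ∀ e : {e : B // e ∈ D ∧ m ≤ e},
        r ⟨e.1, hDQ e.2.1⟩ ≤ r ⟨x, hx⟩ := by
      rintro ⟨e, heD, hme⟩
      obtain ⟨he, hemin⟩ := heD
      have : x ≤ e := le_trans hxm hme
      simpa [Subtype.coe_eta] using hemin x hx this
    have hinj : Function.Injective (fun e : {e : B // e ∈ D ∧ m ≤ e} =>
        (⟨r ⟨e.1, hDQ e.2.1⟩, hembed e⟩ : {y : κ.ord.ToType // y ≤ r ⟨x, hx⟩})) := by
      rintro ⟨e, he⟩ ⟨e', he'⟩ h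
      simp only [Subtype.mk.injEq] at h
      have := r.injective h
      simpa [Subtype.mk.injEq] using congrArg Subtype.val this
    calc #{e : B // e ∈ D ∧ m ≤ e} ≤ #{y : κ.ord.ToType // y ≤ r ⟨x, hx⟩} :=
          Cardinal.mk_le_of_injective hinj
    _ < κ := card_le_typein_lt hκ _
end Part4
section Part5
variable {ι : Type u} [DecidableEq ι] {A : ι → Set B}

variable (A) in
/-- The minimal element of the subalgebra generated by factors in `u` above `m`. -/
noncomputable def proj (hsub : ∀ i, IsBoolSubalg (A i))
    (hind : ∀ s : Finset ι, ∀ f : ι → B,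
      (∀ i ∈ s, f i ∈ A i ∧ f i ≠ ⊥) → s.inf f ≠ ⊥)
    (hgen : boolGen (⋃ i, A i) = Set.univ) (m : B) (u : Finset ι) : B :=
  (interp hsub hind u (mem_J_supp hsub hind hgen m)).choose

variable (hsub : ∀ i, IsBoolSubalg (A i))
    (hind : ∀ s : Finset ι, ∀ f : ι → B,
      (∀ i ∈ s, f i ∈ A i ∧ f i ≠ ⊥) → s.inf f ≠ ⊥)
    (hgen : boolGen (⋃ i, A i) = Set.univ)

lemma proj_mem (m : B) (u : Finset ι) :
    proj A hsub hind hgen m u ∈ J A (supp A hsub hind hgen m ∩ u) :=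
  (interp hsub hind u (mem_J_supp hsub hind hgen m)).choose_spec.1

lemma le_proj (m : B) (u : Finset ι) : m ≤ proj A hsub hind hgen m u :=
  (interp hsub hind u (mem_J_supp hsub hind hgen m)).choose_spec.2.1

lemma proj_min {m : B} {u : Finset ι} {b : B} (hb : b ∈ J A u) (hmb : m ≤ b) :
    proj A hsub hind hgen m u ≤ b :=
  (interp hsub hind u (mem_J_supp hsub hind hgen m)).choose_spec.2.2 b hb hmb

lemma supp_proj_subset (m : B) (u : Finset ι) :
    supp A hsub hind hgen (proj A hsub hind hgen m u) ⊆ u :=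
  subset_trans (supp_subset hsub hind hgen (proj_mem hsub hind hgen m u))
    Finset.inter_subset_right

/-- If `m ≤ e` then `e` lies above the canonical projection of `m` to
`supp m ∩ supp e`. -/
lemma proj_le_of_le {m e : B} (hme : m ≤ e) :
    proj A hsub hind hgen m (supp A hsub hind hgen m ∩ supp A hsub hind hgen e) ≤ e := by
  obtain ⟨c, hcJ, hmc, hcmin⟩ :=
    interp hsub hind (supp A hsub hind hgen e) (mem_J_supp hsub hind hgen m)
  have hce : c ≤ e := hcmin e (mem_J_supp hsub hind hgen e) hme
  refine le_trans (proj_min hsub hind hgen ?_ hmc) hce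
  exact J_mono (by intro i hi; simpa using hi) hsub hcJ

end Part5

section Part6
/-- Finite unions of sets of size `< κ` are of size `< κ`. -/
lemma mk_biUnion_finset_lt {κ : Cardinal.{u}} (hκ : ℵ₀ ≤ κ) {α : Type v} {β : Type u}
    (fs : Finset α) (f : α → Set β) (h : ∀ u ∈ fs, #(f u) < κ) :
    #(⋃ u ∈ fs, f u) < κ := by
  classical
  induction fs using Finset.induction_on with
  | empty => simpa using aleph0_pos.trans_le hκ
  | @insert a s ha ih =>
      rw [Finset.set_biUnion_insert]
      calc #((f a ∪ ⋃ u ∈ s, f u : Set β)) ≤ #(f a) + #(⋃ u ∈ s, f u) :=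
            Cardinal.mk_union_le _ _
      _ < κ := Cardinal.add_lt_of_lt hκ (h a (Finset.mem_insert_self a s))
            (ih fun u hu => h u (Finset.mem_insert_of_mem hu))
end Part6
section Part7
variable {ι : Type u} [DecidableEq ι] {A : ι → Set B}

lemma pstmt_all {κ : Cardinal.{u}} (hκ : ℵ₀ ≤ κ)
    (hsub : ∀ i, IsBoolSubalg (A i))
    (hind : ∀ s : Finset ι, ∀ f : ι → B,
      (∀ i ∈ s, f i ∈ A i ∧ f i ≠ ⊥) → s.inf f ≠ ⊥)
    (hgen : boolGen (⋃ i, A i) = Set.univ)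
    (hsize : ∀ i, #(A i) ≤ κ) :
    ∀ lam : Cardinal.{u}, ∀ Q : Set B, #Q ≤ lam → PStmt κ Q := by
  classical
  intro lam
  refine Cardinal.lt_wf.induction
    (C := fun lam => ∀ Q : Set B, #Q ≤ lam → PStmt κ Q) lam ?_
  clear lam; intro lam IH Q hQlam
  by_cases hsmall : #Q ≤ κ
  · exact pstmt_of_card_le hκ Q hsmall
  push_neg at hsmall
  have hQinf : ℵ₀ ≤ #Q := hκ.trans hsmall.le
  set o := (#Q).ord with ho
  have hmk : #Q = #o.ToType := by rw [ho, Cardinal.mk_ord_toType]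
  obtain ⟨g⟩ := Cardinal.eq.1 hmk
  set qo : o.ToType → B := fun ξ => ((g.symm ξ : Q) : B) with hqo
  have hqoQ : ∀ ξ, qo ξ ∈ Q := fun ξ => (g.symm ξ).2
  -- witnesses below touchable elements
  set w : B → B := fun m => if h : ∃ q ∈ Q, q ≤ m then h.choose else ⊥ with hw
  have hwspec : ∀ m, (∃ q ∈ Q, q ≤ m) → w m ∈ Q ∧ w m ≤ m := by
    intro m h
    rw [hw]
    simp only [dif_pos h]
    exact ⟨h.choose_spec.1, h.choose_spec.2⟩
  -- closure functions
  set G : B → Set B := fun e =>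
    {x | ∃ m, m ∈ J A (supp A hsub hind hgen e) ∧ (∃ q ∈ Q, q ≤ m) ∧ x = w m} with hG
  have hGQ : ∀ e, G e ⊆ Q := by
    rintro e x ⟨m, _, hm, rfl⟩; exact (hwspec m hm).1
  have hGcard : ∀ e, #(G e) ≤ κ := by
    intro e
    have hsub2 : G e ⊆ w '' (J A (supp A hsub hind hgen e)) := by
      rintro x ⟨m, hmJ, _, rfl⟩; exact ⟨m, hmJ, rfl⟩
    calc #(G e) ≤ #(w '' (J A (supp A hsub hind hgen e))) :=
          Cardinal.mk_le_mk_of_subset hsub2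
    _ ≤ #(J A (supp A hsub hind hgen e)) := Cardinal.mk_image_le
    _ ≤ κ := card_J_le hκ hsize _
  set H : Set B → Set B := fun X => X ∪ ⋃ e ∈ X, G e with hH
  set cl : Set B → Set B := fun X => ⋃ n : ULift.{u} ℕ, H^[n.down] X with hcl
  have hXcl : ∀ X : Set B, X ⊆ cl X := fun X x hx => Set.mem_iUnion.2 ⟨⟨0⟩, hx⟩
  have hHQ : ∀ X : Set B, X ⊆ Q → ∀ n, H^[n] X ⊆ Q := by
    intro X hXQ n
    induction n with
    | zero => simpa using hXQ
    | succ n ih =>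
        rw [Function.iterate_succ_apply']
        rintro y (hy | hy)
        · exact ih hy
        · obtain ⟨e, _, hye⟩ := Set.mem_iUnion₂.1 hy
          exact hGQ e hye
  have hclQ : ∀ X : Set B, X ⊆ Q → cl X ⊆ Q := by
    intro X hXQ x hx
    obtain ⟨n, hn⟩ := Set.mem_iUnion.1 hx
    exact hHQ X hXQ n.down hn
  have hGcl : ∀ (X : Set B) (e : B), e ∈ cl X → G e ⊆ cl X := by
    intro X e he x hx
    obtain ⟨n, hn⟩ := Set.mem_iUnion.1 he
    refine Set.mem_iUnion.2 ⟨⟨n.down + 1⟩, ?_⟩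
    rw [Function.iterate_succ_apply']
    exact Or.inr (Set.mem_iUnion₂.2 ⟨e, hn, hx⟩)
  have hclcard : ∀ c : Cardinal.{u}, ℵ₀ ≤ c → κ ≤ c →
      ∀ X : Set B, #X ≤ c → #(cl X) ≤ c := by
    intro c hc hκc X hX
    have hHn : ∀ n, #(H^[n] X) ≤ c := by
      intro n
      induction n with
      | zero => simpa using hX
      | succ n ih =>
          rw [Function.iterate_succ_apply']
          have h1 : #(⋃ e ∈ H^[n] X, G e) ≤ #(H^[n] X) * κ := by
            refine le_trans (Cardinal.mk_biUnion_le _ _) ?_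
            exact mul_le_mul' le_rfl (ciSup_le' fun e => hGcard e)
          calc #(H (H^[n] X)) ≤ #(H^[n] X) + #(⋃ e ∈ H^[n] X, G e) :=
                Cardinal.mk_union_le _ _
          _ ≤ c + c * c := add_le_add ih (le_trans h1 (mul_le_mul' ih hκc))
          _ = c := by rw [Cardinal.mul_eq_self hc, Cardinal.add_eq_self hc]
    calc #(cl X) ≤ #(ULift.{u} ℕ) * ⨆ n : ULift.{u} ℕ, #(H^[n.down] X) :=
          Cardinal.mk_iUnion_le _
    _ ≤ ℵ₀ * c := by
        have : #(ULift.{u} ℕ) = ℵ₀ := by simp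
        rw [this]
        exact mul_le_mul' le_rfl (ciSup_le' fun n => hHn n.down)
    _ ≤ c * c := mul_le_mul' hc le_rfl
    _ = c := Cardinal.mul_eq_self hc
  -- the filtration
  set S : o.ToType → Set B := fun ξ => qo '' {η | η ≤ ξ} with hS
  set Qf : o.ToType → Set B := fun ξ => cl (S ξ) with hQf
  have hSQ : ∀ ξ, S ξ ⊆ Q := by rintro ξ x ⟨η, _, rfl⟩; exact hqoQ η
  have hQfQ : ∀ ξ, Qf ξ ⊆ Q := fun ξ => hclQ _ (hSQ ξ)
  have hQflt : ∀ ξ, #(Qf ξ) < #Q := by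
    intro ξ
    have hSlt : #(S ξ) < #Q := by
      calc #(S ξ) ≤ #{η : o.ToType | η ≤ ξ} := Cardinal.mk_image_le
      _ < #Q := card_le_typein_lt hQinf ξ
    have hb : #(Qf ξ) ≤ max (#(S ξ)) κ :=
      hclcard _ (le_trans hκ (le_max_right _ _)) (le_max_right _ _) _ (le_max_left _ _)
    exact lt_of_le_of_lt hb (max_lt hSlt hsmall)
  have hmemQf : ∀ q (hq : q ∈ Q), q ∈ Qf (g ⟨q, hq⟩) := by
    intro q hq
    refine hXcl _ ⟨g ⟨q, hq⟩, show g ⟨q, hq⟩ ≤ g ⟨q, hq⟩ from le_rfl, ?_⟩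
    simp [hqo]
  -- recursive construction of the levels
  have wfo : WellFounded ((· < ·) : o.ToType → o.ToType → Prop) := wellFounded_lt
  have hEX : ∀ (Dp : Set B) (ξ : o.ToType),
      PStmt κ {x | x ∈ Qf ξ ∧ ¬ ∃ d ∈ Dp, d ≤ x} := by
    intro Dp ξ
    have hsub2 : {x | x ∈ Qf ξ ∧ ¬ ∃ d ∈ Dp, d ≤ x} ⊆ Qf ξ := fun x hx => hx.1
    exact IH (#(Qf ξ)) (lt_of_lt_of_le (hQflt ξ) hQlam) _
      (Cardinal.mk_le_mk_of_subset hsub2)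
  set F : ∀ ξ : o.ToType, (∀ η, η < ξ → Set B) → Set B :=
    fun ξ rec => (hEX (⋃ η, ⋃ h : η < ξ, rec η h) ξ).choose with hF
  set Dfun : o.ToType → Set B := wfo.fix F with hDfun
  set Dp : o.ToType → Set B := fun ξ => ⋃ η, ⋃ _ : η < ξ, Dfun η with hDp
  set Rs : o.ToType → Set B := fun ξ => {x | x ∈ Qf ξ ∧ ¬ ∃ d ∈ Dp ξ, d ≤ x} with hRs
  have hspec : ∀ ξ, Dfun ξ ⊆ Rs ξ ∧ (∀ q ∈ Rs ξ, ∃ d ∈ Dfun ξ, d ≤ q) ∧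
      ∀ m : B, (∃ q ∈ Rs ξ, q ≤ m) →
        (∃ d ∈ Dfun ξ, d ≤ m) ∧ #{e : B // e ∈ Dfun ξ ∧ m ≤ e} < κ := by
    intro ξ
    have hfix : Dfun ξ = (hEX (⋃ η, ⋃ h : η < ξ, Dfun η) ξ).choose := by
      rw [hDfun]
      exact wfo.fix_eq F ξ
    have hcs := (hEX (⋃ η, ⋃ h : η < ξ, Dfun η) ξ).choose_spec
    rw [← hfix] at hcs
    exact hcs
  set D : Set B := ⋃ ξ, Dfun ξ with hDdef
  have hDQ : D ⊆ Q := Set.iUnion_subset fun ξ x hx => hQfQ ξ ((hspec ξ).1 hx).1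
  have hdense : ∀ q ∈ Q, ∃ d ∈ D, d ≤ q := by
    intro q hq
    by_cases hk : ∃ d ∈ Dp (g ⟨q, hq⟩), d ≤ q
    · obtain ⟨d, hd, hdq⟩ := hk
      obtain ⟨η, hη⟩ := Set.mem_iUnion.1 hd
      obtain ⟨_, hdm⟩ := Set.mem_iUnion.1 hη
      exact ⟨d, Set.mem_iUnion.2 ⟨η, hdm⟩, hdq⟩
    · obtain ⟨d, hd, hdq⟩ := (hspec (g ⟨q, hq⟩)).2.1 q ⟨hmemQf q hq, hk⟩
      exact ⟨d, Set.mem_iUnion.2 ⟨g ⟨q, hq⟩, hd⟩, hdq⟩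
  -- the cone bound, by induction on the support size
  have hcone : ∀ n : ℕ, ∀ m : B, (supp A hsub hind hgen m).card ≤ n →
      (∃ q ∈ Q, q ≤ m) → #{e : B // e ∈ D ∧ m ≤ e} < κ := by
    intro n
    induction n using Nat.strong_induction_on with
    | _ n IHn =>
    intro m hcard htouch
    have hEx : ∃ ξ, ∃ d ∈ Dfun ξ, d ≤ m := by
      obtain ⟨q, hq, hqm⟩ := htouch
      obtain ⟨d, hd, hdq⟩ := hdense q hq
      obtain ⟨ξ, hξ⟩ := Set.mem_iUnion.1 hd
      exact ⟨ξ, d, hξ, le_trans hdq hqm⟩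
    obtain ⟨astar, hastar, hastarmin⟩ :=
      wfo.has_min {ξ | ∃ d ∈ Dfun ξ, d ≤ m} hEx
    obtain ⟨dstar, hdstar, hdstarm⟩ := hastar
    have hcover : {e : B | e ∈ D ∧ m ≤ e} ⊆
        {e : B | e ∈ Dfun astar ∧ m ≤ e} ∪
        ⋃ u ∈ (supp A hsub hind hgen m).powerset.filter
            (· ≠ supp A hsub hind hgen m),
          {e : B | e ∈ D ∧ proj A hsub hind hgen m u ≤ e} := by
      rintro e ⟨heD, hme⟩
      obtain ⟨γ, hγ⟩ := Set.mem_iUnion.1 heD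
      rcases lt_trichotomy γ astar with hlt | hEq | hgt
      · by_cases hsupp : supp A hsub hind hgen m ⊆ supp A hsub hind hgen e
        · exfalso
          have hmJ : m ∈ J A (supp A hsub hind hgen e) :=
            J_mono hsupp hsub (mem_J_supp hsub hind hgen m)
          have hwG : w m ∈ G e := ⟨m, hmJ, htouch, rfl⟩
          have heQf : e ∈ Qf γ := ((hspec γ).1 hγ).1
          have hwQf : w m ∈ Qf γ := hGcl _ e heQf hwG
          have hwm := hwspec m htouch
          by_cases hkill : ∃ d ∈ Dp γ, d ≤ w m
          · obtain ⟨d, hd, hdw⟩ := hkill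
            obtain ⟨η, hη⟩ := Set.mem_iUnion.1 hd
            obtain ⟨hlt2, hdm⟩ := Set.mem_iUnion.1 hη
            exact hastarmin η ⟨d, hdm, le_trans hdw hwm.2⟩ (lt_trans hlt2 hlt)
          · obtain ⟨d, hd, hdm⟩ :=
              ((hspec γ).2.2 m ⟨w m, ⟨hwQf, hkill⟩, hwm.2⟩).1
            exact hastarmin γ ⟨d, hd, hdm⟩ hlt
        · refine Or.inr (Set.mem_iUnion₂.2
            ⟨supp A hsub hind hgen m ∩ supp A hsub hind hgen e, ?_, ?_⟩)
          · refine Finset.mem_filter.2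
              ⟨Finset.mem_powerset.2 Finset.inter_subset_left, ?_⟩
            intro hEq2
            apply hsupp
            intro i hi
            have hi2 : i ∈ supp A hsub hind hgen m ∩ supp A hsub hind hgen e := by
              rw [hEq2]; exact hi
            exact (Finset.mem_inter.1 hi2).2
          · exact ⟨heD, proj_le_of_le hsub hind hgen hme⟩
      · exact Or.inl ⟨hEq ▸ hγ, hme⟩
      · exfalso
        exact ((hspec γ).1 hγ).2
          ⟨dstar, Set.mem_iUnion.2 ⟨astar, Set.mem_iUnion.2 ⟨hgt, hdstar⟩⟩,
            le_trans hdstarm hme⟩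
    have h1 : #{e : B // e ∈ Dfun astar ∧ m ≤ e} < κ :=
      ((hspec astar).2.2 m ⟨dstar, (hspec astar).1 hdstar, hdstarm⟩).2
    have h2 : ∀ u ∈ (supp A hsub hind hgen m).powerset.filter
        (· ≠ supp A hsub hind hgen m),
        #{e : B | e ∈ D ∧ proj A hsub hind hgen m u ≤ e} < κ := by
      intro u hu
      obtain ⟨hupow, hune⟩ := Finset.mem_filter.1 hu
      have husub := Finset.mem_powerset.1 hupow
      have hss : u ⊂ supp A hsub hind hgen m :=
        lt_of_le_of_ne husub (by simpa using hune)
      have hclt : u.card < n := lt_of_lt_of_le (Finset.card_lt_card hss) hcard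
      obtain ⟨q, hq, hqm⟩ := htouch
      exact IHn u.card hclt (proj A hsub hind hgen m u)
        (Finset.card_le_card (supp_proj_subset hsub hind hgen m u))
        ⟨q, hq, le_trans hqm (le_proj hsub hind hgen m u)⟩
    calc #{e : B // e ∈ D ∧ m ≤ e}
        ≤ #(({e : B | e ∈ Dfun astar ∧ m ≤ e} ∪
          ⋃ u ∈ (supp A hsub hind hgen m).powerset.filter
              (· ≠ supp A hsub hind hgen m),
            {e : B | e ∈ D ∧ proj A hsub hind hgen m u ≤ e} : Set B)) :=
          Cardinal.mk_le_mk_of_subset hcover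
    _ ≤ #{e : B | e ∈ Dfun astar ∧ m ≤ e} +
          #(⋃ u ∈ (supp A hsub hind hgen m).powerset.filter
              (· ≠ supp A hsub hind hgen m),
            {e : B | e ∈ D ∧ proj A hsub hind hgen m u ≤ e}) :=
          Cardinal.mk_union_le _ _
    _ < κ := Cardinal.add_lt_of_lt hκ h1 (mk_biUnion_finset_lt hκ _ _ h2)
  refine ⟨D, hDQ, hdense, ?_⟩
  intro m htouch
  constructor
  · obtain ⟨q, hq, hqm⟩ := htouch
    obtain ⟨d, hd, hdq⟩ := hdense q hq
    exact ⟨d, hd, le_trans hdq hqm⟩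
  · exact hcone (supp A hsub hind hgen m).card m le_rfl htouch

end Part7

end FPaux

/-- Suppose `κ ≥ ω` and `B` is (internally) a coproduct (free product) of boolean
subalgebras `A i`, each of size at most `κ`: the `A i` generate `B` and are independent
(every finite meet of nonzero elements from distinct factors is nonzero).  Then every
subset `Q` of `B` is almost `κ`-op-like: it has a dense subset `D` in which no element
lies below `κ`-many elements of `D`. -/
theorem subset_coproduct_almost_kappa_op_like {ι : Type u} (κ : Cardinal.{u}) (hκ : ℵ₀ ≤ κ)
    (A : ι → Set B) (hsub : ∀ i, IsBoolSubalg (A i)) (hsize : ∀ i, #(A i) ≤ κ)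
    (hgen : boolGen (⋃ i, A i) = Set.univ)
    (hind : ∀ s : Finset ι, ∀ f : ι → B, (∀ i ∈ s, f i ∈ A i ∧ f i ≠ ⊥) → s.inf f ≠ ⊥)
    (Q : Set B) :
    ∃ D ⊆ Q, (∀ q ∈ Q, ∃ d ∈ D, d ≤ q) ∧
      ∀ d ∈ D, #{e : B // e ∈ D ∧ d < e} < κ := by
  classical
  obtain ⟨D, hDQ, hdense, hcone⟩ :=
    FPaux.pstmt_all hκ hsub hind hgen hsize (#Q) Q le_rfl
  refine ⟨D, hDQ, hdense, ?_⟩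
  intro d hd
  have hdQ : d ∈ Q := hDQ hd
  have hcover : {e : B | e ∈ D ∧ d < e} ⊆
      ⋃ u ∈ (FPaux.supp A hsub hind hgen d).powerset,
        {e : B | e ∈ D ∧ FPaux.proj A hsub hind hgen d u ≤ e} := by
    rintro e ⟨heD, hde⟩
    exact Set.mem_iUnion₂.2
      ⟨FPaux.supp A hsub hind hgen d ∩ FPaux.supp A hsub hind hgen e,
        Finset.mem_powerset.2 Finset.inter_subset_left,
        heD, FPaux.proj_le_of_le hsub hind hgen hde.le⟩
  calc #{e : B // e ∈ D ∧ d < e}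
      ≤ #(⋃ u ∈ (FPaux.supp A hsub hind hgen d).powerset,
          {e : B | e ∈ D ∧ FPaux.proj A hsub hind hgen d u ≤ e}) :=
        Cardinal.mk_le_mk_of_subset hcover
  _ < κ := by
      refine FPaux.mk_biUnion_finset_lt hκ _ _ fun u hu => ?_
      exact (hcone (FPaux.proj A hsub hind hgen d u)
        ⟨d, hdQ, FPaux.le_proj hsub hind hgen d u⟩).2
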